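/- Let p be an odd prime and G(p) the graph on 𝔽_p² where (a,c) ~ (b,d) iff a ≠ b and ab = c + d. Every eigenvalue λ of the adjacency matrix of G(p) other than the degree eigenvalue p − 1 satisfies λ² ≤ 4p − 5. -/

import Mathlib

/-- The graph `G(p)`: vertices `𝔽_p²`, with `(a,c) ~ (b,d)` iff `a ≠ b` and `ab = c + d`. -/
def Gp (p : ℕ) : SimpleGraph (ZMod p × ZMod p) where
  Adj u v := u.1 ≠ v.1 ∧ u.1 * v.1 = u.2 + v.2
  symm := by
    constructor
    rintro u v ⟨h1, h2⟩
    refine ⟨h1.symm, ?_⟩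
    rw [mul_comm, h2, add_comm]
  loopless := by constructor; rintro u ⟨h1, _⟩; exact h1 rfl

instance (p : ℕ) : DecidableRel (Gp p).Adj :=
  fun u v => inferInstanceAs (Decidable (u.1 ≠ v.1 ∧ u.1 * v.1 = u.2 + v.2))

open Finset Matrix

lemma Gp_adj (p : ℕ) (u v : ZMod p × ZMod p) :
    (Gp p).Adj u v ↔ (u.1 ≠ v.1 ∧ u.1 * v.1 = u.2 + v.2) := Iff.rfl

lemma sum_ite_ne (p : ℕ) [Fact p.Prime] (a : ZMod p) :
    ∑ b : ZMod p, (if b ≠ a then (1:ℝ) else 0) = (p:ℝ) - 1 := by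
  rw [Finset.sum_boole]
  rw [Finset.filter_ne', Finset.card_erase_of_mem (Finset.mem_univ a), Finset.card_univ, ZMod.card]
  have hp : 1 ≤ p := (Fact.out : p.Prime).one_lt.le
  push_cast [Nat.cast_sub hp]
  ring

/-- key entry computation -/
lemma entry (p : ℕ) [Fact p.Prime] (u w : ZMod p × ZMod p) :
    ((Gp p).adjMatrix ℝ * (Gp p).adjMatrix ℝ) u w - 1 =
      (if u = w then (p:ℝ) - 2 else 0)
      - (if u.1 = w.1 ∧ u.2 ≠ w.2 then 1 else 0)
      - (if u.1 ≠ w.1 ∧ w.2 = u.2 + u.1*(w.1-u.1) then 1 else 0)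
      - (if u.1 ≠ w.1 ∧ w.2 = u.2 + w.1*(w.1-u.1) then 1 else 0) := by
  have step1 : ((Gp p).adjMatrix ℝ * (Gp p).adjMatrix ℝ) u w =
      ∑ b : ZMod p, (if b ≠ u.1 ∧ b ≠ w.1 ∧ b*(w.1-u.1) = w.2-u.2 then (1:ℝ) else 0) := by
    rw [Matrix.mul_apply, Fintype.sum_prod_type]
    refine Finset.sum_congr rfl fun b _ => ?_
    rw [Finset.sum_eq_single (u.1*b - u.2)]
    · simp only [SimpleGraph.adjMatrix_apply, Gp_adj]
      by_cases h1 : b ≠ u.1 ∧ b ≠ w.1 ∧ b*(w.1-u.1) = w.2-u.2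
      · rw [if_pos h1]
        rw [if_pos (show u.1 ≠ b ∧ u.1 * b = u.2 + (u.1*b - u.2) from ⟨fun h => h1.1 h.symm, by ring⟩), if_pos (show b ≠ w.1 ∧ b * w.1 = (u.1*b - u.2) + w.2 from ⟨h1.2.1, by linear_combination h1.2.2⟩)]
        ring
      · rw [if_neg h1]
        by_cases h2 : u.1 ≠ b ∧ u.1 * b = u.2 + (u.1*b - u.2)
        · rw [if_pos h2]
          rw [if_neg]
          · ring
          · rintro ⟨h3, h4⟩
            exact h1 ⟨fun h => h2.1 h.symm, h3, by linear_combination h4⟩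
        · rw [if_neg h2]; ring
    · intro d _ hd
      simp only [SimpleGraph.adjMatrix_apply, Gp_adj]
      rw [if_neg, zero_mul]
      rintro ⟨-, h4⟩
      exact hd (by linear_combination -h4)
    · intro h; exact absurd (Finset.mem_univ _) h
  rw [step1]
  by_cases hu1 : u.1 = w.1
  · by_cases hu2 : u.2 = w.2
    · have huw : u = w := Prod.ext hu1 hu2
      rw [if_pos huw, if_neg (by tauto), if_neg (by tauto), if_neg (by tauto)]
      have : ∀ b : ZMod p, (if b ≠ u.1 ∧ b ≠ w.1 ∧ b*(w.1-u.1) = w.2-u.2 then (1:ℝ) else 0)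
          = (if b ≠ u.1 then (1:ℝ) else 0) := by
        intro b
        rw [hu1, hu2]
        by_cases h : b ≠ w.1
        · rw [if_pos ⟨h, h, by ring⟩, if_pos h]
        · rw [if_neg (by tauto), if_neg h]
      rw [Finset.sum_congr rfl fun b _ => this b, sum_ite_ne]
      ring
    · have huw : u ≠ w := fun h => hu2 (by rw [h])
      rw [if_neg huw, if_pos ⟨hu1, hu2⟩, if_neg (by tauto), if_neg (by tauto)]
      have : ∀ b : ZMod p, (if b ≠ u.1 ∧ b ≠ w.1 ∧ b*(w.1-u.1) = w.2-u.2 then (1:ℝ) else 0) = 0 := by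
        intro b
        rw [if_neg]
        rintro ⟨-, -, h⟩
        rw [hu1, sub_self, mul_zero] at h
        exact hu2 (by linear_combination h)
      rw [Finset.sum_congr rfl fun b _ => this b, Finset.sum_const_zero]
      ring
  · -- unique b
    set t : ZMod p := (w.2-u.2) * (w.1-u.1)⁻¹ with ht
    have hunit : (w.1 - u.1) ≠ 0 := sub_ne_zero.mpr (fun h => hu1 h.symm)
    have hsol : ∀ b : ZMod p, b*(w.1-u.1) = w.2-u.2 ↔ b = t :=
      fun b => (eq_mul_inv_iff_mul_eq₀ hunit).symm
    have huw : u ≠ w := fun h => hu1 (by rw [h])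
    rw [if_neg huw, if_neg (by tauto)]
    have key : ∑ b : ZMod p, (if b ≠ u.1 ∧ b ≠ w.1 ∧ b*(w.1-u.1) = w.2-u.2 then (1:ℝ) else 0)
        = if t ≠ u.1 ∧ t ≠ w.1 then 1 else 0 := by
      rw [Finset.sum_eq_single t]
      · by_cases h : t ≠ u.1 ∧ t ≠ w.1
        · rw [if_pos ⟨h.1, h.2, (hsol t).mpr rfl⟩, if_pos h]
        · rw [if_neg (by tauto), if_neg h]
      · intro b _ hb
        rw [if_neg]
        rintro ⟨-, -, h⟩
        exact hb ((hsol b).mp h)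
      · intro h; exact absurd (Finset.mem_univ _) h
    rw [key]
    have e1 : t = u.1 ↔ w.2 = u.2 + u.1*(w.1-u.1) := by
      constructor
      · intro h
        have h2 := (hsol u.1).mpr h.symm
        linear_combination -h2
      · intro h
        exact ((hsol u.1).mp (by linear_combination -h)).symm
    have e2 : t = w.1 ↔ w.2 = u.2 + w.1*(w.1-u.1) := by
      constructor
      · intro h
        have h2 := (hsol w.1).mpr h.symm
        linear_combination -h2
      · intro h
        exact ((hsol w.1).mp (by linear_combination -h)).symm
    have c1 : (u.1 ≠ w.1 ∧ w.2 = u.2 + u.1*(w.1-u.1)) ↔ t = u.1 :=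
      ⟨fun h => e1.mpr h.2, fun h => ⟨hu1, e1.mp h⟩⟩
    have c2 : (u.1 ≠ w.1 ∧ w.2 = u.2 + w.1*(w.1-u.1)) ↔ t = w.1 :=
      ⟨fun h => e2.mpr h.2, fun h => ⟨hu1, e2.mp h⟩⟩
    rw [if_congr c1 rfl rfl, if_congr c2 rfl rfl]
    by_cases h1 : t = u.1
    · have h2 : ¬ t = w.1 := fun h => hu1 (h1 ▸ h)
      rw [if_neg (by tauto), if_pos h1, if_neg h2]; ring
    · by_cases h2 : t = w.1
      · rw [if_neg (by tauto), if_neg h1, if_pos h2]; ring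
      · rw [if_pos ⟨h1,h2⟩, if_neg h1, if_neg h2]; ring

lemma sum_ite_ne' (p : ℕ) [Fact p.Prime] (a : ZMod p) :
    ∑ b : ZMod p, (if a ≠ b then (1:ℝ) else 0) = (p:ℝ) - 1 := by
  rw [← sum_ite_ne p a]
  exact Finset.sum_congr rfl fun b _ => if_congr ne_comm rfl rfl

lemma rowD (p : ℕ) [Fact p.Prime] (u : ZMod p × ZMod p) :
    ∑ w : ZMod p × ZMod p, (if u = w then (p:ℝ) - 2 else 0) = (p:ℝ) - 2 := by
  rw [Finset.sum_ite_eq Finset.univ u (fun _ => (p:ℝ)-2), if_pos (Finset.mem_univ u)]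

lemma rowE0 (p : ℕ) [Fact p.Prime] (u : ZMod p × ZMod p) :
    ∑ w : ZMod p × ZMod p, (if u.1 = w.1 ∧ u.2 ≠ w.2 then (1:ℝ) else 0) = (p:ℝ) - 1 := by
  rw [Fintype.sum_prod_type]
  rw [Finset.sum_eq_single u.1]
  · rw [← sum_ite_ne' p u.2]
    refine Finset.sum_congr rfl fun c _ => ?_
    by_cases h : u.2 ≠ c
    · rw [if_pos ⟨rfl, h⟩, if_pos h]
    · rw [if_neg (by tauto), if_neg h]
  · intro b _ hb
    rw [Finset.sum_eq_zero fun c _ => if_neg (by rintro ⟨h, -⟩; exact hb h.symm)]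
  · intro h; exact absurd (Finset.mem_univ _) h

lemma rowE1 (p : ℕ) [Fact p.Prime] (u : ZMod p × ZMod p) (f : ZMod p → ZMod p) :
    ∑ w : ZMod p × ZMod p, (if u.1 ≠ w.1 ∧ w.2 = f w.1 then (1:ℝ) else 0) = (p:ℝ) - 1 := by
  rw [Fintype.sum_prod_type]
  rw [← sum_ite_ne' p u.1]
  refine Finset.sum_congr rfl fun b _ => ?_
  by_cases h : u.1 ≠ b
  · rw [if_pos h, Finset.sum_eq_single (f b)]
    · rw [if_pos ⟨h, rfl⟩]
    · intro c _ hc; exact if_neg (by rintro ⟨-, h2⟩; exact hc h2)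
    · intro h; exact absurd (Finset.mem_univ _) h
  · rw [if_neg h, Finset.sum_eq_zero fun c _ => if_neg (by tauto)]

lemma colsum (p : ℕ) [Fact p.Prime] (x : ZMod p × ZMod p) :
    ∑ u : ZMod p × ZMod p, (Gp p).adjMatrix ℝ u x = (p:ℝ) - 1 := by
  have hsym : ∀ u, (Gp p).adjMatrix ℝ u x = (Gp p).adjMatrix ℝ x u := by
    intro u
    simp only [SimpleGraph.adjMatrix_apply]
    exact if_congr ((Gp p).adj_comm u x) rfl rfl
  rw [Finset.sum_congr rfl fun u _ => hsym u]
  rw [Fintype.sum_prod_type]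
  rw [← sum_ite_ne' p x.1]
  refine Finset.sum_congr rfl fun b _ => ?_
  by_cases h : x.1 ≠ b
  · rw [if_pos h, Finset.sum_eq_single (x.1*b - x.2)]
    · simp only [SimpleGraph.adjMatrix_apply, Gp_adj]
      rw [if_pos (show x.1 ≠ b ∧ x.1 * b = x.2 + (x.1*b - x.2) from ⟨h, by ring⟩)]
    · intro d _ hd
      simp only [SimpleGraph.adjMatrix_apply, Gp_adj]
      exact if_neg (by rintro ⟨-, h2⟩; exact hd (by linear_combination -h2))
    · intro h; exact absurd (Finset.mem_univ _) h
  · rw [if_neg h, Finset.sum_eq_zero]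
    intro d _
    simp only [SimpleGraph.adjMatrix_apply, Gp_adj]
    exact if_neg (by tauto)

/-- Every eigenvalue `μ ≠ p - 1` of the adjacency matrix of `G(p)` satisfies
`μ² ≤ 4p - 5`. -/
theorem stmt11 (p : ℕ) [Fact p.Prime] (hodd : Odd p) (μ : ℝ)
    (v : ZMod p × ZMod p → ℝ) (hv : v ≠ 0)
    (heig : ((Gp p).adjMatrix ℝ).mulVec v = μ • v) (hμ : μ ≠ (p : ℝ) - 1) :
    μ ^ 2 ≤ 4 * (p : ℝ) - 5 := by
  have hp2 : (2:ℝ) ≤ (p:ℝ) := by exact_mod_cast (Fact.out : p.Prime).two_le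
  set A := (Gp p).adjMatrix ℝ with hA
  -- sum of v is zero
  have hsv : ∑ u, v u = 0 := by
    have h1 : ∑ u, (A.mulVec v) u = ((p:ℝ) - 1) * ∑ u, v u := by
      simp only [Matrix.mulVec, dotProduct]
      rw [Finset.sum_comm, Finset.mul_sum]
      refine Finset.sum_congr rfl fun x _ => ?_
      rw [← Finset.sum_mul, colsum]
    rw [heig] at h1
    simp only [Pi.smul_apply, smul_eq_mul, ← Finset.mul_sum] at h1
    by_contra h
    exact hμ (mul_right_cancel₀ h h1)
  -- pick the coordinate of max abs
  obtain ⟨u₀, -, hmax⟩ := Finset.exists_max_image Finset.univ (fun w => |v w|)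
    (Finset.univ_nonempty)
  have hmax' : ∀ w, |v w| ≤ |v u₀| := fun w => hmax w (Finset.mem_univ w)
  have hpos : 0 < |v u₀| := by
    obtain ⟨u, hu⟩ := Function.ne_iff.mp hv
    exact lt_of_lt_of_le (abs_pos.mpr hu) (hmax' u)
  -- main identity
  have hmain : μ ^ 2 * v u₀ = ∑ w, ((A * A) u₀ w - 1) * v w := by
    have h2 : (A * A).mulVec v = (μ^2) • v := by
      rw [← Matrix.mulVec_mulVec, heig, Matrix.mulVec_smul, heig, smul_smul, ← sq]
    have h3 : ((A * A).mulVec v) u₀ = ∑ w, (A * A) u₀ w * v w := rfl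
    rw [h2] at h3
    simp only [Pi.smul_apply, smul_eq_mul] at h3
    rw [h3]
    rw [Finset.sum_congr rfl fun w _ => (by ring : ((A*A) u₀ w - 1) * v w = (A*A) u₀ w * v w - v w)]
    rw [Finset.sum_sub_distrib, hsv, sub_zero]
  -- the bound function
  set B : (ZMod p × ZMod p) → ℝ := fun w =>
      (if u₀ = w then (p:ℝ) - 2 else 0)
      + (if u₀.1 = w.1 ∧ u₀.2 ≠ w.2 then 1 else 0)
      + (if u₀.1 ≠ w.1 ∧ w.2 = u₀.2 + u₀.1*(w.1-u₀.1) then 1 else 0)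
      + (if u₀.1 ≠ w.1 ∧ w.2 = u₀.2 + w.1*(w.1-u₀.1) then 1 else 0) with hB
  have habs : ∀ w, |(A * A) u₀ w - 1| ≤ B w := by
    intro w
    rw [entry p u₀ w]
    simp only [hB]
    split_ifs <;> (rw [abs_le]; constructor <;> linarith)
  have hBsum : ∑ w, B w = 4 * (p:ℝ) - 5 := by
    simp only [hB]
    simp only [Finset.sum_add_distrib]
    rw [rowD, rowE0, rowE1 p u₀ (fun b => u₀.2 + u₀.1*(b-u₀.1)),
      rowE1 p u₀ (fun b => u₀.2 + b*(b-u₀.1))]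
    ring
  have hineq : μ ^ 2 * |v u₀| ≤ (4 * (p:ℝ) - 5) * |v u₀| := by
    calc μ ^ 2 * |v u₀| = |μ ^ 2 * v u₀| := by
          rw [abs_mul, abs_of_nonneg (sq_nonneg μ)]
      _ ≤ ∑ w, |((A * A) u₀ w - 1) * v w| := by
          rw [hmain]; exact Finset.abs_sum_le_sum_abs _ _
      _ ≤ ∑ w, B w * |v u₀| := by
          refine Finset.sum_le_sum fun w _ => ?_
          rw [abs_mul]
          exact mul_le_mul (habs w) (hmax' w) (abs_nonneg _)
            (le_trans (abs_nonneg _) (habs w))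
      _ = (4 * (p:ℝ) - 5) * |v u₀| := by rw [← Finset.sum_mul, hBsum]
  exact le_of_mul_le_mul_right hineq hpos
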